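/- No single cell in the CBM can output the infinite repeating pattern ABCABC... with probability 1. Formally: let a cell have finitely many 'events', each event $e$ having a monotone (nondecreasing or nonincreasing) firing function $f_e : \mathbb{R} \to [0,1]$ of the cell's current potential. If three distinct symbols A, B, C are each emitted exactly when its corresponding event fires, then there exist two symbols $S_1 \neq S_2$ among $\{A,B,C\}$ and such that at every potential where $S_1$ fires with positive probability, $S_2$ also fires with positive probability. Consequently the output sequence equals ABCABC... with probability strictly less than 1. -/

import Mathlib

open Fin.NatCast

lemma mono_nested (f g : ℝ → ℝ) (hf : Monotone f) (hg : Monotone g) :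
    (∀ x, 0 < f x → 0 < g x) ∨ (∀ x, 0 < g x → 0 < f x) := by
  by_contra h
  push_neg at h
  obtain ⟨⟨a, hfa, hga⟩, ⟨b, hgb, hfb⟩⟩ := h
  rcases le_total a b with hab | hab
  · have := hf hab; linarith
  · have := hg hab; linarith

lemma anti_nested (f g : ℝ → ℝ) (hf : Antitone f) (hg : Antitone g) :
    (∀ x, 0 < f x → 0 < g x) ∨ (∀ x, 0 < g x → 0 < f x) := by
  by_contra h
  push_neg at h
  obtain ⟨⟨a, hfa, hga⟩, ⟨b, hgb, hfb⟩⟩ := h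
  rcases le_total a b with hab | hab
  · have := hg hab; linarith
  · have := hf hab; linarith

lemma pick (F : Fin 3 → ℝ → ℝ) (i j : Fin 3) (hij : i ≠ j)
    (h : (∀ x, 0 < F i x → 0 < F j x) ∨ (∀ x, 0 < F j x → 0 < F i x)) :
    ∃ i j : Fin 3, i ≠ j ∧ ∀ x : ℝ, 0 < F i x → 0 < F j x := by
  rcases h with h | h
  · exact ⟨i, j, hij, h⟩
  · exact ⟨j, i, hij.symm, h⟩

/-- A single CBM cell cannot output the repeating pattern
ABCABC… with probability 1.  Each of the three symbols is emitted by an event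
with a monotone (nondecreasing or nonincreasing) firing function
`F i : ℝ → [0,1]` of the cell's potential.  Then two distinct symbols have
nested positive-probability regions: whenever one fires with positive
probability so does the other.  Consequently there is no potential trajectory
along which, in every round `r`, symbol `r mod 3` fires with probability 1
while the other two fire with probability 0. -/
theorem no_repeating_pattern (F : Fin 3 → ℝ → ℝ)
    (hrange : ∀ i x, 0 ≤ F i x ∧ F i x ≤ 1)
    (hmono : ∀ i, Monotone (F i) ∨ Antitone (F i)) :
    (∃ i j : Fin 3, i ≠ j ∧ ∀ x : ℝ, 0 < F i x → 0 < F j x) ∧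
    ¬ ∃ x : ℕ → ℝ, ∀ r : ℕ,
        F ((r : ℕ) : Fin 3) (x r) = 1 ∧
        ∀ i : Fin 3, i ≠ ((r : ℕ) : Fin 3) → F i (x r) = 0 := by
  have key : ∃ i j : Fin 3, i ≠ j ∧ ∀ x : ℝ, 0 < F i x → 0 < F j x := by
    rcases hmono 0 with h0 | h0 <;> rcases hmono 1 with h1 | h1 <;>
      rcases hmono 2 with h2 | h2
    · exact pick F 0 1 (by decide) (mono_nested _ _ h0 h1)
    · exact pick F 0 1 (by decide) (mono_nested _ _ h0 h1)
    · exact pick F 0 2 (by decide) (mono_nested _ _ h0 h2)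
    · exact pick F 1 2 (by decide) (anti_nested _ _ h1 h2)
    · exact pick F 1 2 (by decide) (mono_nested _ _ h1 h2)
    · exact pick F 0 2 (by decide) (anti_nested _ _ h0 h2)
    · exact pick F 0 1 (by decide) (anti_nested _ _ h0 h1)
    · exact pick F 0 1 (by decide) (anti_nested _ _ h0 h1)
  refine ⟨key, ?_⟩
  rintro ⟨x, hx⟩
  obtain ⟨i, j, hij, hsub⟩ := key
  obtain ⟨h1, h2⟩ := hx i.val
  rw [Fin.cast_val_eq_self] at h1 h2
  have hpos := hsub (x i.val) (by rw [h1]; norm_num)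
  rw [h2 j hij.symm] at hpos
  exact lt_irrefl 0 hpos
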